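/- Let d ≥ 2, let G be a d-regular tree, let v be a vertex of G, and let n ≥ 1. The number of closed walks of length 2n in G starting and ending at v that visit v only at the start and at the end (i.e., v occurs in the walk exactly at positions 0 and 2n) equals d · (d-1)^(n-1) · catalan(n-1). -/

import Mathlib

open SimpleGraph

namespace TreeCatalanAux

variable {V : Type*} {G : SimpleGraph V}

/-- Walks are determined by their length and vertex sequence. -/
lemma walk_ext {a b : V} (p : G.Walk a b) : ∀ q : G.Walk a b, p.length = q.length →
    (∀ i, p.getVert i = q.getVert i) → p = q := by
  induction p with
  | nil =>
    intro q hl _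
    cases q with
    | nil => rfl
    | cons h2 q2 => simp at hl
  | cons h p ih =>
    rename_i a c b
    intro q hl hv
    cases q with
    | nil => simp at hl
    | cons h2 q2 =>
      rename_i c2
      obtain rfl : c = c2 := by
        have h1 := hv 1
        simpa [Walk.getVert_cons_succ] using h1
      obtain rfl : p = q2 := ih q2 (by simpa using hl) fun i => by
        have := hv (i + 1)
        simpa [Walk.getVert_cons_succ] using this
      rfl

lemma not_mem_support_iff {y a b : V} {p : G.Walk a b} :
    y ∉ p.support ↔ ∀ i, p.getVert i ≠ y := by
  constructor
  · intro h i hc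
    refine h (Walk.mem_support_iff_exists_getVert.mpr ⟨min i p.length, ?_, min_le_right _ _⟩)
    rcases le_or_gt i p.length with hi | hi
    · rw [min_eq_left hi]; exact hc
    · rw [min_eq_right hi.le, Walk.getVert_length, ← hc,
        Walk.getVert_of_length_le _ hi.le]
  · intro h hy
    obtain ⟨n, hn, -⟩ := Walk.mem_support_iff_exists_getVert.mp hy
    exact h n hn

/-- In an acyclic graph, a walk starting at `u` that avoids `y` also avoids any other
neighbor `x` of `y` (with `u`, `x` neighbors of `y`, `u ≠ x`). -/
lemma tree_avoid (hacyc : G.IsAcyclic) {x y u : V} (hxy : G.Adj x y) (hyu : G.Adj y u)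
    (hux : u ≠ x) {z : V} (p : G.Walk u z) (hy : y ∉ p.support) : x ∉ p.support := by
  classical
  intro hx
  have hyq : y ∉ (p.takeUntil x hx).support := fun h => hy (p.support_takeUntil_subset hx h)
  have hyP : y ∉ (p.takeUntil x hx).toPath.1.support :=
    fun h => hyq ((p.takeUntil x hx).support_toPath_subset h)
  have hQ : (Walk.cons hyu.symm (Walk.cons hxy.symm Walk.nil) : G.Walk u x).IsPath := by
    rw [Walk.isPath_def]
    simp [hyu.ne', hxy.ne', hux]
  have huniq := hacyc.path_unique ((p.takeUntil x hx).toPath) ⟨_, hQ⟩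
  apply hyP
  rw [huniq]
  simp

/-- First-return decomposition of a walk ending at `y`. -/
lemma exists_first_return {u y : V} (t : G.Walk u y) :
    ∃ (q : G.Walk u y) (r : G.Walk y y), t = q.append r ∧ ∀ j < q.length, q.getVert j ≠ y := by
  induction t with
  | nil => exact ⟨Walk.nil, Walk.nil, rfl, by simp⟩
  | cons h t ih =>
    rename_i u c y
    by_cases huy : u = y
    · subst huy
      exact ⟨Walk.nil, Walk.cons h t, rfl, by simp⟩
    · obtain ⟨q, r, ht, hq⟩ := ih
      refine ⟨Walk.cons h q, r, by rw [Walk.cons_append, ← ht], ?_⟩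
      intro j hj
      cases j with
      | zero => simpa using huy
      | succ j =>
        rw [Walk.getVert_cons_succ]
        exact hq j (by simpa using hj)

lemma getVert_concat_of_le {a b c : V} (p : G.Walk a b) (h' : G.Adj b c) {j : ℕ}
    (hj : j ≤ p.length) : (p.concat h').getVert j = p.getVert j := by
  rw [Walk.concat_eq_append, Walk.getVert_append]
  rcases lt_or_eq_of_le hj with h2 | h2
  · rw [if_pos h2]
  · rw [if_neg (by omega), h2, Nat.sub_self, Walk.getVert_zero, Walk.getVert_length]

/-- In an acyclic graph, a walk from a neighbor `c` of `a` back to `a` that avoids `a`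
before the end must end with the edge `c–a`, and the initial part is a closed walk at `c`
avoiding `a`. -/
lemma peel (hacyc : G.IsAcyclic) {a c : V} (h : G.Adj a c) (q : G.Walk c a)
    (hq : ∀ j < q.length, q.getVert j ≠ a) :
    ∃ (p : G.Walk c c) (h' : G.Adj c a), q = p.concat h' ∧ ∀ j, p.getVert j ≠ a := by
  cases q with
  | nil => exact absurd rfl h.ne'
  | cons h1 t1 =>
    rename_i b1
    obtain ⟨b, p, h', hc⟩ := Walk.exists_cons_eq_concat h1 t1
    have hlc : t1.length = p.length := by
      have := congrArg Walk.length hc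
      simpa [Walk.length_concat] using this
    have havoid : ∀ j, p.getVert j ≠ a := by
      intro j
      rcases le_or_gt j p.length with hjl | hjl
      · rw [← getVert_concat_of_le p h' hjl, ← hc]
        exact hq j (by simp [hlc]; omega)
      · rw [Walk.getVert_of_length_le _ hjl.le, ← Walk.getVert_length p]
        have hend := hq p.length (by simp [hlc])
        rwa [hc, getVert_concat_of_le p h' le_rfl] at hend
    have hyp : a ∉ p.support := not_mem_support_iff.mpr havoid
    have hbc : b = c := by
      by_contra hbc
      exact (tree_avoid hacyc h' h (fun hcb => hbc hcb.symm) p hyp) p.end_mem_support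
    subst hbc
    exact ⟨p, h', hc, havoid⟩

/-- In an acyclic graph, closed walks have even length. -/
lemma closed_even (hacyc : G.IsAcyclic) :
    ∀ (n : ℕ) {a : V} (p : G.Walk a a), p.length = n → Even n := by
  intro n
  induction n using Nat.strong_induction_on with
  | _ n ih =>
    intro a p hp
    cases p with
    | nil =>
      simp only [Walk.length_nil] at hp
      exact hp ▸ Even.zero
    | cons h t =>
      rename_i c
      obtain ⟨q, r, ht, hq⟩ := exists_first_return t
      obtain ⟨p0, h', hc, hav⟩ := peel hacyc h q hq
      have h1 : q.length = p0.length + 1 := by rw [hc, Walk.length_concat]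
      have h2 : n = 1 + q.length + r.length := by
        have hql := congrArg Walk.length ht
        rw [Walk.length_append] at hql
        simp only [Walk.length_cons] at hp
        omega
      obtain ⟨k1, hk1⟩ := ih p0.length (by omega) p0 rfl
      obtain ⟨k2, hk2⟩ := ih r.length (by omega) r rfl
      exact ⟨k1 + k2 + 1, by omega⟩

/-- Glue: `y → u`, then a closed walk at `u`, then `u → y`, then a closed walk at `y`. -/
def glue {y u : V} (h : G.Adj y u) (p : G.Walk u u) (q : G.Walk y y) : G.Walk y y :=
  Walk.cons h ((p.concat h.symm).append q)

lemma glue_length {y u : V} (h : G.Adj y u) (p : G.Walk u u) (q : G.Walk y y) :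
    (glue h p q).length = p.length + q.length + 2 := by
  simp only [glue, Walk.length_cons, Walk.length_append, Walk.length_concat]
  omega

lemma glue_getVert_succ {y u : V} (h : G.Adj y u) (p : G.Walk u u) (q : G.Walk y y) (j : ℕ) :
    (glue h p q).getVert (j + 1) =
      if j ≤ p.length then p.getVert j else q.getVert (j - p.length - 1) := by
  show ((p.concat h.symm).append q).getVert j = _
  rw [Walk.getVert_append, Walk.length_concat]
  by_cases hj : j ≤ p.length
  · rw [if_pos (by omega), if_pos hj, getVert_concat_of_le _ _ hj]
  · rw [if_neg (by omega), if_neg hj]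
    congr 1

/-- Closed walks at `y` of length `2k` avoiding `x` strictly inside. -/
abbrev W (G : SimpleGraph V) (x y : V) (k : ℕ) : Type _ :=
  {p : G.Walk y y // p.length = 2 * k ∧ ∀ i : ℕ, 0 < i → i < 2 * k → p.getVert i ≠ x}

instance finW [∀ w : V, Fintype (G.neighborSet w)] (x y : V) (k : ℕ) : Finite (W G x y k) := by
  classical
  exact Finite.of_injective
    (fun p : W G x y k => (⟨p.1, p.2.1⟩ : {p : G.Walk y y // p.length = 2 * k}))
    fun a b hab => by
      simp only [Subtype.mk.injEq] at hab
      exact Subtype.ext hab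

lemma W_avoid {x y : V} {k : ℕ} (hyx : y ≠ x) (p : W G x y k) (i : ℕ) : p.1.getVert i ≠ x := by
  rcases Nat.eq_zero_or_pos i with rfl | hi
  · simpa using hyx
  rcases lt_or_ge i (2 * k) with h2 | h2
  · exact p.2.2 i hi h2
  · rw [Walk.getVert_of_length_le _ (by rw [p.2.1]; exact h2)]
    exact hyx

lemma card_sigma' {ι : Type*} [Fintype ι] (f : ι → Type*) [∀ i, Finite (f i)] :
    Nat.card (Σ i, f i) = ∑ i, Nat.card (f i) := by
  classical
  letI : ∀ i, Fintype (f i) := fun i => Fintype.ofFinite (f i)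
  simp [Nat.card_eq_fintype_card]

lemma card_nbr_ne [∀ w : V, Fintype (G.neighborSet w)] {x y : V} (hxy : G.Adj x y) {d : ℕ}
    (hreg : ∀ w : V, G.degree w = d) :
    Nat.card {u : V // G.Adj y u ∧ u ≠ x} = d - 1 := by
  classical
  have e : {u : V // G.Adj y u ∧ u ≠ x} ≃ {u : V // u ∈ (G.neighborFinset y).erase x} :=
    Equiv.subtypeEquivRight fun u => by
      simp [Finset.mem_erase, SimpleGraph.mem_neighborFinset, and_comm]
  rw [Nat.card_congr e, Nat.card_eq_fintype_card, Fintype.card_coe,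
    Finset.card_erase_of_mem (by rw [SimpleGraph.mem_neighborFinset]; exact hxy.symm)]
  rw [SimpleGraph.card_neighborFinset_eq_degree, hreg]

lemma card_nbr [∀ w : V, Fintype (G.neighborSet w)] (y : V) {d : ℕ}
    (hreg : ∀ w : V, G.degree w = d) :
    Nat.card {u : V // G.Adj y u} = d := by
  classical
  have e : {u : V // G.Adj y u} ≃ {u : V // u ∈ G.neighborFinset y} :=
    Equiv.subtypeEquivRight fun u => by simp [SimpleGraph.mem_neighborFinset]
  rw [Nat.card_congr e, Nat.card_eq_fintype_card, Fintype.card_coe,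
    SimpleGraph.card_neighborFinset_eq_degree, hreg]

lemma glue_ne_len {y u u' : V} (h : G.Adj y u) (h' : G.Adj y u') (p : G.Walk u u)
    (p' : G.Walk u' u') (q : G.Walk y y) (q' : G.Walk y y)
    (hp' : ∀ j, p'.getVert j ≠ y)
    (heq : ∀ j, (glue h p q).getVert j = (glue h' p' q').getVert j) :
    ¬ p.length < p'.length := by
  intro hlt
  have h1 := heq (p.length + 1 + 1)
  rw [glue_getVert_succ, glue_getVert_succ, if_neg (by omega), if_pos (by omega)] at h1
  rw [show p.length + 1 - p.length - 1 = 0 from by omega, Walk.getVert_zero] at h1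
  exact hp' _ h1.symm

lemma main [∀ w : V, Fintype (G.neighborSet w)] (hacyc : G.IsAcyclic) {d : ℕ}
    (hreg : ∀ w : V, G.degree w = d) :
    ∀ (m : ℕ) {x y : V}, G.Adj x y → Nat.card (W G x y m) = (d - 1) ^ m * catalan m := by
  intro m
  induction m using Nat.strong_induction_on with
  | _ m ih =>
    intro x y hxy
    cases m with
    | zero =>
      letI : Unique (W G x y 0) := by
        refine ⟨⟨⟨Walk.nil, by simp, by intro i h1 h2; omega⟩⟩, ?_⟩
        rintro ⟨p, hp, -⟩
        exact Subtype.ext (Walk.nil_iff_eq_nil.mp (Walk.length_eq_zero_iff.mp (by simpa using hp)))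
      rw [Nat.card_unique]
      simp
    | succ m =>
      classical
      have hpx : ∀ (u : {u : V // G.Adj y u ∧ u ≠ x}) {i : ℕ} (p : W G y u.1 i) (j : ℕ),
          p.1.getVert j ≠ x := by
        intro u i p j
        have hpy : ∀ j, p.1.getVert j ≠ y := W_avoid u.2.1.ne' p
        have hsup : y ∉ p.1.support := not_mem_support_iff.mpr hpy
        exact not_mem_support_iff.mp (tree_avoid hacyc hxy u.2.1 u.2.2 p.1 hsup) j
      have hlen2 : ∀ (i : Fin (m + 1)) (u : {u : V // G.Adj y u ∧ u ≠ x})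
          (p : W G y u.1 i.1) (q : W G x y (m - i.1)),
          (glue u.2.1 p.1 q.1).length = 2 * (m + 1) := by
        intro i u p q
        have h1 := p.2.1; have h2 := q.2.1; have h3 := i.2
        rw [glue_length, h1, h2]
        omega
      have hav2 : ∀ (i : Fin (m + 1)) (u : {u : V // G.Adj y u ∧ u ≠ x})
          (p : W G y u.1 i.1) (q : W G x y (m - i.1)) (j : ℕ), 0 < j → j < 2 * (m + 1) →
          (glue u.2.1 p.1 q.1).getVert j ≠ x := by
        intro i u p q j h1 h2
        obtain ⟨j, rfl⟩ : ∃ j', j = j' + 1 := ⟨j - 1, by omega⟩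
        rw [glue_getVert_succ]
        split_ifs with hj
        · exact hpx u p j
        · rcases Nat.eq_zero_or_pos (j - p.1.length - 1) with hl | hl
          · rw [hl, Walk.getVert_zero]
            exact hxy.ne'
          · refine q.2.2 _ hl ?_
            have hp1 := p.2.1; have h3 := i.2
            omega
      let F : (Σ i : Fin (m + 1), Σ u : {u : V // G.Adj y u ∧ u ≠ x},
          W G y u.1 i.1 × W G x y (m - i.1)) → W G x y (m + 1) := fun t =>
        ⟨glue t.2.1.2.1 t.2.2.1.1 t.2.2.2.1, hlen2 t.1 t.2.1 t.2.2.1 t.2.2.2,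
          fun j a b => hav2 t.1 t.2.1 t.2.2.1 t.2.2.2 j a b⟩
      have Finj : Function.Injective F := by
        rintro ⟨i, u, p, q⟩ ⟨i', u', p', q'⟩ hFF
        have hw : glue u.2.1 p.1 q.1 = glue u'.2.1 p'.1 q'.1 := congrArg Subtype.val hFF
        have hv : ∀ j, (glue u.2.1 p.1 q.1).getVert j = (glue u'.2.1 p'.1 q'.1).getVert j :=
          fun j => by rw [hw]
        have hpy : ∀ j, p.1.getVert j ≠ y := W_avoid u.2.1.ne' p
        have hpy' : ∀ j, p'.1.getVert j ≠ y := W_avoid u'.2.1.ne' p'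
        have n1 : ¬ p.1.length < p'.1.length :=
          glue_ne_len u.2.1 u'.2.1 p.1 p'.1 q.1 q'.1 hpy' hv
        have n2 : ¬ p'.1.length < p.1.length :=
          glue_ne_len u'.2.1 u.2.1 p'.1 p.1 q'.1 q.1 hpy (fun j => (hv j).symm)
        have hll : p.1.length = p'.1.length := by omega
        obtain rfl : i = i' := by
          have e1 := p.2.1; have e2 := p'.2.1
          exact Fin.ext (by omega)
        obtain rfl : u = u' := by
          have h1 := hv (0 + 1)
          rw [glue_getVert_succ, glue_getVert_succ,
            if_pos (Nat.zero_le _), if_pos (Nat.zero_le _), Walk.getVert_zero,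
            Walk.getVert_zero] at h1
          exact Subtype.ext h1
        have hpp : p = p' := by
          apply Subtype.ext
          apply walk_ext _ _ (by rw [p.2.1, p'.2.1])
          intro j
          rcases le_or_gt j p.1.length with hj | hj
          · have h1 := hv (j + 1)
            rwa [glue_getVert_succ, glue_getVert_succ, if_pos hj,
              if_pos (by omega)] at h1
          · rw [Walk.getVert_of_length_le _ hj.le,
              Walk.getVert_of_length_le _ (by omega : p'.1.length ≤ j)]
        have hqq : q = q' := by
          apply Subtype.ext
          apply walk_ext _ _ (by rw [q.2.1, q'.2.1])
          intro j
          have h1 := hv (j + p.1.length + 1 + 1)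
          rw [glue_getVert_succ, glue_getVert_succ, if_neg (by omega), if_neg (by omega)] at h1
          rw [show j + p.1.length + 1 - p.1.length - 1 = j from by omega] at h1
          rw [show j + p.1.length + 1 - p'.1.length - 1 = j from by omega] at h1
          exact h1
        rw [hpp, hqq]
      have Fsurj : Function.Surjective F := by
        rintro ⟨P, hPlen, hPavoid⟩
        cases P with
        | nil => simp at hPlen
        | cons h t =>
          rename_i u
          have htlen : t.length = 2 * m + 1 := by
            simp only [Walk.length_cons] at hPlen
            omega
          have hux : u ≠ x := by
            have h1 := hPavoid 1 one_pos (by omega)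
            rwa [show (1 : ℕ) = 0 + 1 from rfl, Walk.getVert_cons_succ,
              Walk.getVert_zero] at h1
          obtain ⟨q, r, htqr, hq⟩ := exists_first_return t
          obtain ⟨p0, h', hc, hav⟩ := peel hacyc h q hq
          have hq_len : q.length = p0.length + 1 := by rw [hc, Walk.length_concat]
          obtain ⟨i0, hi0⟩ := closed_even hacyc p0.length p0 rfl
          have hqr : t.length = q.length + r.length := by
            have := congrArg Walk.length htqr
            rwa [Walk.length_append] at this
          have hi0m : i0 ≤ m := by omega
          refine ⟨⟨⟨i0, by omega⟩, ⟨u, h, hux⟩, ⟨p0, by show p0.length = 2 * i0; omega,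
            fun j _ _ => hav j⟩, ⟨r, by show r.length = 2 * (m - i0); omega, ?_⟩⟩, ?_⟩
          · intro l hl1 hl2
            have hl2' : l < 2 * (m - i0) := hl2
            have h1 := hPavoid (l + q.length + 1) (by omega) (by omega)
            rw [Walk.getVert_cons_succ, htqr, Walk.getVert_append, if_neg (by omega),
              Nat.add_sub_cancel] at h1
            exact h1
          · apply Subtype.ext
            show glue h p0 r = Walk.cons h t
            rw [htqr, hc]
            rfl
      haveI hfin_u : Finite {u : V // G.Adj y u ∧ u ≠ x} :=
        Finite.of_injective (fun u => (⟨u.1, u.2.1⟩ : G.neighborSet y)) (by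
          intro a b hab
          simp only [Subtype.mk.injEq] at hab
          exact Subtype.ext (congrArg (fun w : G.neighborSet y => (w : V)) hab))
      letI : Fintype {u : V // G.Adj y u ∧ u ≠ x} := Fintype.ofFinite _
      rw [← Nat.card_eq_of_bijective F ⟨Finj, Fsurj⟩, card_sigma']
      have hstep : ∀ i : Fin (m + 1),
          Nat.card (Σ u : {u : V // G.Adj y u ∧ u ≠ x}, W G y u.1 i.1 × W G x y (m - i.1)) =
            (d - 1) ^ (m + 1) * (catalan i.1 * catalan (m - i.1)) := by
        intro i
        rw [card_sigma']
        have hsummand : ∀ u : {u : V // G.Adj y u ∧ u ≠ x},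
            Nat.card (W G y u.1 i.1 × W G x y (m - i.1)) =
              ((d - 1) ^ i.1 * catalan i.1) * ((d - 1) ^ (m - i.1) * catalan (m - i.1)) := by
          intro u
          rw [Nat.card_prod, ih i.1 (by omega) u.2.1, ih (m - i.1) (by omega) hxy]
        rw [Finset.sum_congr rfl fun u _ => hsummand u, Finset.sum_const, Finset.card_univ,
          ← Nat.card_eq_fintype_card, card_nbr_ne hxy hreg, smul_eq_mul]
        have hpow : (d - 1) * ((d - 1) ^ i.1 * (d - 1) ^ (m - i.1)) = (d - 1) ^ (m + 1) := by
          rw [← pow_add, show i.1 + (m - i.1) = m from by omega, ← pow_succ']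
        calc (d - 1) * ((d - 1) ^ i.1 * catalan i.1 * ((d - 1) ^ (m - i.1) * catalan (m - i.1)))
            = ((d - 1) * ((d - 1) ^ i.1 * (d - 1) ^ (m - i.1))) *
              (catalan i.1 * catalan (m - i.1)) := by ring
          _ = (d - 1) ^ (m + 1) * (catalan i.1 * catalan (m - i.1)) := by rw [hpow]
      rw [Finset.sum_congr rfl fun i _ => hstep i, ← Finset.mul_sum, catalan_succ]

lemma top [∀ w : V, Fintype (G.neighborSet w)] (hacyc : G.IsAcyclic) {d : ℕ}
    (hreg : ∀ w : V, G.degree w = d) (v : V) {n : ℕ} (hn : 1 ≤ n) :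
    Nat.card (W G v v n) = d * ((d - 1) ^ (n - 1) * catalan (n - 1)) := by
  classical
  have hlen2 : ∀ (u : {u : V // G.Adj v u}) (p : W G v u.1 (n - 1)),
      (glue u.2 p.1 (Walk.nil : G.Walk v v)).length = 2 * n := by
    intro u p
    have h1 := p.2.1
    rw [glue_length, h1]
    simp only [Walk.length_nil]
    omega
  have hav2 : ∀ (u : {u : V // G.Adj v u}) (p : W G v u.1 (n - 1)) (j : ℕ),
      0 < j → j < 2 * n → (glue u.2 p.1 (Walk.nil : G.Walk v v)).getVert j ≠ v := by
    intro u p j h1 h2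
    obtain ⟨j, rfl⟩ : ∃ j', j = j' + 1 := ⟨j - 1, by omega⟩
    have hp1 := p.2.1
    rw [glue_getVert_succ, if_pos (by omega)]
    exact W_avoid u.2.ne' p j
  let F : (Σ u : {u : V // G.Adj v u}, W G v u.1 (n - 1)) → W G v v n := fun t =>
    ⟨glue t.1.2 t.2.1 Walk.nil, hlen2 t.1 t.2, fun j a b => hav2 t.1 t.2 j a b⟩
  have Finj : Function.Injective F := by
    rintro ⟨u, p⟩ ⟨u', p'⟩ hFF
    have hw : glue u.2 p.1 Walk.nil = glue u'.2 p'.1 Walk.nil := congrArg Subtype.val hFF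
    have hv : ∀ j, (glue u.2 p.1 (Walk.nil : G.Walk v v)).getVert j =
        (glue u'.2 p'.1 (Walk.nil : G.Walk v v)).getVert j := fun j => by rw [hw]
    have hll : p.1.length = p'.1.length := by rw [p.2.1, p'.2.1]
    obtain rfl : u = u' := by
      have h1 := hv (0 + 1)
      rw [glue_getVert_succ, glue_getVert_succ, if_pos (Nat.zero_le _),
        if_pos (Nat.zero_le _), Walk.getVert_zero, Walk.getVert_zero] at h1
      exact Subtype.ext h1
    have hpp : p = p' := by
      apply Subtype.ext
      apply walk_ext _ _ (by rw [p.2.1, p'.2.1])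
      intro j
      rcases le_or_gt j p.1.length with hj | hj
      · have h1 := hv (j + 1)
        rwa [glue_getVert_succ, glue_getVert_succ, if_pos hj, if_pos (by omega)] at h1
      · rw [Walk.getVert_of_length_le _ hj.le,
          Walk.getVert_of_length_le _ (by omega : p'.1.length ≤ j)]
    rw [hpp]
  have Fsurj : Function.Surjective F := by
    rintro ⟨P, hPlen, hPavoid⟩
    cases P with
    | nil =>
      simp only [Walk.length_nil] at hPlen
      omega
    | cons h t =>
      rename_i u
      have htlen : t.length = 2 * n - 1 := by
        simp only [Walk.length_cons] at hPlen
        omega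
      have hq : ∀ j < t.length, t.getVert j ≠ v := by
        intro j hj
        have h1 := hPavoid (j + 1) (by omega) (by omega)
        rwa [Walk.getVert_cons_succ] at h1
      obtain ⟨p0, h', hc, hav⟩ := peel hacyc h t hq
      have hp0len : t.length = p0.length + 1 := by rw [hc, Walk.length_concat]
      refine ⟨⟨⟨u, h⟩, ⟨p0, by show p0.length = 2 * (n - 1); omega,
        fun j _ _ => hav j⟩⟩, ?_⟩
      apply Subtype.ext
      show glue h p0 Walk.nil = Walk.cons h t
      rw [hc]
      show Walk.cons h ((p0.concat h.symm).append Walk.nil) = _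
      rw [Walk.append_nil]
  haveI hfin_u : Finite {u : V // G.Adj v u} :=
    Finite.of_injective (fun u => (⟨u.1, u.2⟩ : G.neighborSet v)) (by
      intro a b hab
      simp only [Subtype.mk.injEq] at hab
      exact Subtype.ext (congrArg Subtype.val hab))
  letI : Fintype {u : V // G.Adj v u} := Fintype.ofFinite _
  rw [← Nat.card_eq_of_bijective F ⟨Finj, Fsurj⟩, card_sigma']
  have hsummand : ∀ u : {u : V // G.Adj v u},
      Nat.card (W G v u.1 (n - 1)) = (d - 1) ^ (n - 1) * catalan (n - 1) :=
    fun u => main hacyc hreg (n - 1) u.2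
  rw [Finset.sum_congr rfl fun u _ => hsummand u, Finset.sum_const, Finset.card_univ,
    ← Nat.card_eq_fintype_card, card_nbr v hreg, smul_eq_mul]

end TreeCatalanAux

theorem stmt_0 (d : ℕ) (hd : 2 ≤ d) {V : Type*} (G : SimpleGraph V)
    [∀ w : V, Fintype (G.neighborSet w)]
    (hconn : G.Connected) (hacyc : G.IsAcyclic)
    (hreg : ∀ w : V, G.degree w = d)
    (v : V) (n : ℕ) (hn : 1 ≤ n) :
    Nat.card {p : G.Walk v v // p.length = 2 * n ∧
        ∀ i : ℕ, 0 < i → i < 2 * n → p.getVert i ≠ v} =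
      d * (d - 1) ^ (n - 1) * catalan (n - 1) := by
  have := TreeCatalanAux.top (G := G) hacyc hreg v hn
  rw [mul_assoc]
  exact this
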